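/- Let n ≥ 2 and let (C_{αβγ}), with indices in {0, 1, …, n}, be a family of real numbers symmetric in its first two indices (C_{αβγ} = C_{βαγ}) which satisfies the trace identity η^{αβ}C_{αβγ} = 2·η^{αβ}C_{αγβ} for every γ. Then there exists a family (A_{αβγ}) of real numbers, symmetric in its first two indices, such that for all α, β, γ: −(n+1)A_{αβγ} + A_{αγβ} + A_{βγα} + (η^{μν}A_{αμν})η_{βγ} + (η^{μν}A_{βμν})η_{αγ} − (η^{μν}A_{μνα})η_{βγ} − (η^{μν}A_{μνβ})η_{γα} − (η^{μν}A_{μνγ})η_{αβ} = −C_{αβγ}. -/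

import Mathlib

/-- The Minkowski metric η = diag(−1, 1, …, 1) on ℝ^{n+1}; since η is its own inverse,
`η^{μν} = η_{μν}`. -/
noncomputable def etaM (n : ℕ) : Matrix (Fin (n + 1)) (Fin (n + 1)) ℝ :=
  Matrix.diagonal fun μ => if μ = 0 then -1 else 1

/-- for `n ≥ 2` and a family `C_{αβγ}` symmetric in its first two indices and
satisfying the contracted Bianchi-type trace identity `η^{αβ}C_{αβγ} = 2 η^{αβ}C_{αγβ}`,
there exists a family `A_{αβγ}`, symmetric in its first two indices, solving
`−(n+1)A_{αβγ} + A_{αγβ} + A_{βγα} + (η^{μν}A_{αμν})η_{βγ} + (η^{μν}A_{βμν})η_{αγ}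
 − (η^{μν}A_{μνα})η_{βγ} − (η^{μν}A_{μνβ})η_{γα} − (η^{μν}A_{μνγ})η_{αβ} = −C_{αβγ}`. -/
theorem exists_A_of_C (n : ℕ) (hn : 2 ≤ n)
    (Cc : Fin (n + 1) → Fin (n + 1) → Fin (n + 1) → ℝ)
    (hCsymm : ∀ α β γ, Cc α β γ = Cc β α γ)
    (hCtrace : ∀ γ, (∑ α, ∑ β, etaM n α β * Cc α β γ) = 2 * ∑ α, ∑ β, etaM n α β * Cc α γ β) :
    ∃ A : Fin (n + 1) → Fin (n + 1) → Fin (n + 1) → ℝ,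
      (∀ α β γ, A α β γ = A β α γ) ∧
      ∀ α β γ,
        -((n : ℝ) + 1) * A α β γ + A α γ β + A β γ α +
          (∑ μ, ∑ ν, etaM n μ ν * A α μ ν) * etaM n β γ +
          (∑ μ, ∑ ν, etaM n μ ν * A β μ ν) * etaM n α γ -
          (∑ μ, ∑ ν, etaM n μ ν * A μ ν α) * etaM n β γ -
          (∑ μ, ∑ ν, etaM n μ ν * A μ ν β) * etaM n γ α -
          (∑ μ, ∑ ν, etaM n μ ν * A μ ν γ) * etaM n α β = -Cc α β γ := by
  have hn2 : (2:ℝ) ≤ (n:ℝ) := by exact_mod_cast hn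
  set d : Fin (n+1) → ℝ := fun μ => if μ = 0 then -1 else 1 with hd
  have heta : ∀ μ ν, etaM n μ ν = if μ = ν then d μ else 0 := by
    intro μ ν; simp [etaM, Matrix.diagonal_apply, hd]
  have hd2 : ∀ μ, d μ * d μ = 1 := by intro μ; by_cases h : μ = 0 <;> simp [hd, h]
  have hetadiag : ∀ μ, etaM n μ μ = d μ := by intro μ; simp [heta]
  have hcollapse : ∀ X : Fin (n+1) → Fin (n+1) → ℝ,
      (∑ μ, ∑ ν, etaM n μ ν * X μ ν) = ∑ μ, d μ * X μ μ := by
    intro X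
    refine Finset.sum_congr rfl fun μ _ => ?_
    rw [Finset.sum_eq_single μ]
    · rw [hetadiag]
    · intro ν _ hν; rw [heta]; simp [Ne.symm hν]
    · simp
  set v : Fin (n+1) → ℝ := fun γ => ∑ μ, d μ * Cc μ γ μ with hv
  have hu : ∀ γ, (∑ μ, d μ * Cc μ μ γ) = 2 * v γ := by
    intro γ
    have h := hCtrace γ
    rw [hcollapse, hcollapse] at h
    simpa [hv] using h
  have hvC : ∀ α, (∑ μ, d μ * Cc α μ μ) = v α := by
    intro α; simp only [hv]; exact Finset.sum_congr rfl fun μ _ => by rw [hCsymm]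
  have hNsum : (∑ μ : Fin (n+1), d μ * d μ) = (n:ℝ) + 1 := by
    simp [hd2]
  have hbne : ((n:ℝ)^2 + n - 2) ≠ 0 := by nlinarith
  set b : ℝ := ((n:ℝ)^2 + n - 2)⁻¹ with hbdef
  have hbinv : b * ((n:ℝ)^2 + n - 2) = 1 := inv_mul_cancel₀ hbne
  set A : Fin (n+1) → Fin (n+1) → Fin (n+1) → ℝ :=
    fun α β γ => b * ((n:ℝ) * Cc α β γ + Cc α γ β + Cc β γ α - v γ * etaM n α β) with hA
  have hetaSymm : ∀ α β, etaM n α β = etaM n β α := by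
    intro α β; rw [heta, heta]; by_cases h : α = β
    · subst h; simp
    · simp [h, Ne.symm h]
  refine ⟨A, ?_, ?_⟩
  · intro α β γ
    simp only [hA]
    rw [hCsymm α β γ, hetaSymm α β]; ring
  · intro α β γ
    have hdelta : ∀ α, (∑ μ, d μ * (v μ * etaM n α μ)) = v α := by
      intro α
      rw [Finset.sum_eq_single α]
      · rw [hetadiag]
        calc d α * (v α * d α) = v α * (d α * d α) := by ring
        _ = v α := by rw [hd2]; ring
      · intro ν _ hν; rw [heta]; simp [Ne.symm hν]
      · simp
    have hT : ∀ α, (∑ μ, d μ * A α μ μ) = ((n:ℝ)+2) * b * v α := by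
      intro α
      have step : ∀ μ : Fin (n+1), d μ * A α μ μ =
          (b * (n:ℝ)) * (d μ * Cc α μ μ) + b * (d μ * Cc α μ μ) + b * (d μ * Cc μ μ α)
            - b * (d μ * (v μ * etaM n α μ)) := by
        intro μ; simp only [hA]; ring
      rw [Finset.sum_congr rfl fun μ _ => step μ]
      rw [Finset.sum_sub_distrib, Finset.sum_add_distrib, Finset.sum_add_distrib,
        ← Finset.mul_sum, ← Finset.mul_sum, ← Finset.mul_sum, ← Finset.mul_sum]
      rw [hvC, hu, hdelta]; ring
    have hS : ∀ α, (∑ μ, d μ * A μ μ α) = ((n:ℝ)+1) * b * v α := by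
      intro α
      have step : ∀ μ : Fin (n+1), d μ * A μ μ α =
          (b * (n:ℝ)) * (d μ * Cc μ μ α) + (2 * b) * (d μ * Cc μ α μ)
            - (b * v α) * (d μ * etaM n μ μ) := by
        intro μ; simp only [hA]; ring
      rw [Finset.sum_congr rfl fun μ _ => step μ]
      rw [Finset.sum_sub_distrib, Finset.sum_add_distrib,
        ← Finset.mul_sum, ← Finset.mul_sum, ← Finset.mul_sum]
      have : (∑ μ, d μ * etaM n μ μ) = (n:ℝ) + 1 := by
        rw [← hNsum]; exact Finset.sum_congr rfl fun μ _ => by rw [hetadiag]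
      rw [hu, this]
      have hvdef : (∑ μ, d μ * Cc μ α μ) = v α := rfl
      rw [hvdef]; ring
    rw [hcollapse, hcollapse, hcollapse, hcollapse, hcollapse, hT, hT, hS, hS, hS]
    simp only [hA]
    rw [hCsymm γ β α, hCsymm β α γ, hCsymm γ α β, hetaSymm γ α]
    rw [hbdef]
    field_simp
    linear_combination (-Cc α β γ) * inv_mul_cancel₀ hbne
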